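/- arXiv:1002.0686 — 4 statements merged into one kernel-verified Lean document; each statement's English description precedes it below -/
import Mathlib

section
/- Let Q = (0,1)^{d−1} × (−1, 0), with S = [0,1]^{d−1} × {0}. Let ρ⁰, ρ¹ be probability measures on the closure of Q of the form ρⁱ = ρⁱ_Q + ρⁱ_S, where ρⁱ_Q has density bounded by k̄ on Q and ρⁱ_S is concentrated on S. Set ℓ = W₁(ρ⁰, ρ¹). Then for every Lipschitz function j on the closure of Q: ∫_S j d(ρ⁰_S − ρ¹_S) ≤ Lip(j)·ℓ + c(k̄)·‖j‖_∞ · ℓ^{1/2}, where c(k̄) is a constant depending only on k̄. -/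
open MeasureTheory
open scoped ENNReal NNReal

noncomputable def IsCoupling {d : ℕ} (γ : Measure (EuclideanSpace ℝ (Fin d) × EuclideanSpace ℝ (Fin d)))
    (μ ν : Measure (EuclideanSpace ℝ (Fin d))) : Prop :=
  γ.map Prod.fst = μ ∧ γ.map Prod.snd = ν

/-- The Wasserstein distance of order `p` (defined as an infimum over couplings). -/
noncomputable def Wass {d : ℕ} (p : ℝ) (μ ν : Measure (EuclideanSpace ℝ (Fin d))) : ℝ :=
  sInf { c : ℝ | ∃ γ : Measure (EuclideanSpace ℝ (Fin d) × EuclideanSpace ℝ (Fin d)),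
    IsCoupling γ μ ν ∧ c = (∫ z, dist z.1 z.2 ^ p ∂γ) ^ (1/p) }

/-- The open box `(0,1)^{d} × (-1,0)` in `ℝ^{d+1}`. -/
def boxQ (d : ℕ) : Set (EuclideanSpace ℝ (Fin (d+1))) :=
  {x | (∀ i : Fin d, x i.castSucc ∈ Set.Ioo (0:ℝ) 1) ∧ x (Fin.last d) ∈ Set.Ioo (-1:ℝ) 0}

/-- The top face `S = [0,1]^{d} × {0}` in `ℝ^{d+1}`. -/
def faceS (d : ℕ) : Set (EuclideanSpace ℝ (Fin (d+1))) :=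
  {x | (∀ i : Fin d, x i.castSucc ∈ Set.Icc (0:ℝ) 1) ∧ x (Fin.last d) = 0}

lemma continuous_coord {n : ℕ} (i : Fin n) :
    Continuous fun x : EuclideanSpace ℝ (Fin n) => x i :=
  (EuclideanSpace.proj (𝕜 := ℝ) i).continuous

lemma coord_dist_le {n : ℕ} (x y : EuclideanSpace ℝ (Fin n)) (i : Fin n) :
    |x i - y i| ≤ dist x y := by
  rw [EuclideanSpace.dist_eq]
  rw [show |x i - y i| = Real.sqrt (|x i - y i|^2) by rw [Real.sqrt_sq_eq_abs, abs_abs]]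
  apply Real.sqrt_le_sqrt
  have := Finset.single_le_sum (f := fun j => dist (x j) (y j)^2)
    (fun j _ => sq_nonneg _) (Finset.mem_univ i)
  simpa [Real.dist_eq, sq_abs] using this

lemma isOpen_boxQ (d : ℕ) : IsOpen (boxQ d) := by
  have h : boxQ d = (⋂ i : Fin d,
      (fun x : EuclideanSpace ℝ (Fin (d+1)) => x i.castSucc) ⁻¹' Set.Ioo 0 1) ∩
      ((fun x : EuclideanSpace ℝ (Fin (d+1)) => x (Fin.last d)) ⁻¹' Set.Ioo (-1) 0) := by
    ext x; simp [boxQ]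
  rw [h]
  exact (isOpen_iInter_of_finite fun i => isOpen_Ioo.preimage (continuous_coord _)).inter
    (isOpen_Ioo.preimage (continuous_coord _))

lemma isClosed_bigBox (d : ℕ) : IsClosed {x : EuclideanSpace ℝ (Fin (d+1)) |
    (∀ i : Fin d, x i.castSucc ∈ Set.Icc (0:ℝ) 1) ∧ x (Fin.last d) ∈ Set.Icc (-1:ℝ) 0} := by
  have h : {x : EuclideanSpace ℝ (Fin (d+1)) |
      (∀ i : Fin d, x i.castSucc ∈ Set.Icc (0:ℝ) 1) ∧ x (Fin.last d) ∈ Set.Icc (-1:ℝ) 0} =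
      (⋂ i : Fin d,
      (fun x : EuclideanSpace ℝ (Fin (d+1)) => x i.castSucc) ⁻¹' Set.Icc 0 1) ∩
      ((fun x : EuclideanSpace ℝ (Fin (d+1)) => x (Fin.last d)) ⁻¹' Set.Icc (-1) 0) := by
    ext x; simp [Set.mem_iInter]
  rw [h]
  exact (isClosed_iInter fun i => isClosed_Icc.preimage (continuous_coord _)).inter
    (isClosed_Icc.preimage (continuous_coord _))

lemma closure_boxQ_subset (d : ℕ) : closure (boxQ d) ⊆ {x : EuclideanSpace ℝ (Fin (d+1)) |
    (∀ i : Fin d, x i.castSucc ∈ Set.Icc (0:ℝ) 1) ∧ x (Fin.last d) ∈ Set.Icc (-1:ℝ) 0} := by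
  apply closure_minimal _ (isClosed_bigBox d)
  rintro x ⟨h1, h2⟩
  exact ⟨fun i => Set.Ioo_subset_Icc_self (h1 i), Set.Ioo_subset_Icc_self h2⟩

lemma faceS_subset_closure (d : ℕ) : faceS d ⊆ closure (boxQ d) := by
  intro x hx
  set p : EuclideanSpace ℝ (Fin (d+1)) :=
    (WithLp.equiv 2 (Fin (d+1) → ℝ)).symm (fun i => if i = Fin.last d then (-1/2 : ℝ) else 1/2)
    with hp
  have hpapp : ∀ i, p i = if i = Fin.last d then (-1/2 : ℝ) else 1/2 := fun i => rfl
  set t : ℕ → ℝ := fun n => 1/(n+1) with htdef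
  set u : ℕ → EuclideanSpace ℝ (Fin (d+1)) := fun n => x + t n • (p - x) with hu
  have huapp : ∀ n i, u n i = x i + t n * (p i - x i) := by
    intro n i
    simp [hu, PiLp.add_apply, PiLp.smul_apply, PiLp.sub_apply, smul_eq_mul]
  have ht0 : ∀ n : ℕ, 0 < t n := by intro n; simp only [htdef]; positivity
  have ht1 : ∀ n : ℕ, t n ≤ 1 := by
    intro n; simp only [htdef]
    rw [div_le_one (by positivity)]; linarith [Nat.cast_nonneg (α := ℝ) n]
  have hmem : ∀ n, u n ∈ boxQ d := by
    intro n
    have h0 := ht0 n; have h1 := ht1 n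
    constructor
    · intro i
      have hxi := hx.1 i
      have hcoord : u n i.castSucc = x i.castSucc + t n * (1/2 - x i.castSucc) := by
        rw [huapp, hpapp, if_neg (Fin.castSucc_lt_last i).ne]
      rw [hcoord]
      constructor
      · nlinarith [hxi.1, hxi.2]
      · nlinarith [hxi.1, hxi.2]
    · have hcoord : u n (Fin.last d) = x (Fin.last d) + t n * (-1/2 - x (Fin.last d)) := by
        rw [huapp, hpapp, if_pos rfl]
      rw [hcoord, hx.2]
      constructor
      · nlinarith
      · nlinarith
  have htend : Filter.Tendsto u Filter.atTop (nhds x) := by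
    have h0 : Filter.Tendsto t Filter.atTop (nhds 0) := by
      simpa [htdef] using tendsto_one_div_add_atTop_nhds_zero_nat (𝕜 := ℝ)
    have hc : Continuous fun s : ℝ => x + s • (p - x) := by fun_prop
    have h2 := (hc.tendsto 0).comp h0
    rw [hu]
    simpa [Function.comp_def] using h2
  exact mem_closure_of_tendsto htend (Filter.Eventually.of_forall hmem)

lemma norm_le_of_mem_closure (d : ℕ) {x : EuclideanSpace ℝ (Fin (d+1))}
    (hx : x ∈ closure (boxQ d)) : ‖x‖ ≤ Real.sqrt (d+1) := by
  obtain ⟨h1, h2⟩ := closure_boxQ_subset d hx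
  rw [EuclideanSpace.norm_eq]
  apply Real.sqrt_le_sqrt
  have hb : ∀ i : Fin (d+1), ‖x i‖ ^ 2 ≤ 1 := by
    intro i
    induction i using Fin.lastCases with
    | last =>
      have := h2
      rw [Real.norm_eq_abs, sq_abs]
      nlinarith [this.1, this.2]
    | cast i =>
      have := h1 i
      rw [Real.norm_eq_abs, sq_abs]
      nlinarith [this.1, this.2]
  calc ∑ i, ‖x i‖ ^ 2 ≤ ∑ _i : Fin (d+1), (1:ℝ) := Finset.sum_le_sum (fun i _ => hb i)
    _ = (d+1 : ℝ) := by simp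

lemma volume_strip (d : ℕ) {δ : ℝ} (hδ : 0 < δ) :
    volume (boxQ d ∩ {x : EuclideanSpace ℝ (Fin (d+1)) | -δ < x (Fin.last d)})
      ≤ ENNReal.ofReal δ := by
  classical
  set A : Fin (d+1) → Set ℝ := fun i => if i = Fin.last d then Set.Ioo (-δ) 0 else Set.Ioo 0 1
    with hA
  have hsub : boxQ d ∩ {x : EuclideanSpace ℝ (Fin (d+1)) | -δ < x (Fin.last d)} ⊆
      (MeasurableEquiv.toLp 2 (Fin (d+1) → ℝ)).symm ⁻¹' Set.univ.pi A := by
    rintro x ⟨⟨h1, h2⟩, h3⟩ i _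
    have happ : (MeasurableEquiv.toLp 2 (Fin (d+1) → ℝ)).symm x i = x i := rfl
    rw [happ]
    by_cases hi : i = Fin.last d
    · subst hi; simp only [hA, if_pos rfl]
      exact ⟨h3, h2.2⟩
    · obtain ⟨j, rfl⟩ := Fin.exists_castSucc_eq.mpr hi
      simp only [hA, if_neg hi]
      exact h1 j
  refine le_trans (measure_mono hsub) ?_
  have hmeas : MeasurableSet (Set.univ.pi A) :=
    MeasurableSet.univ_pi (fun i => by by_cases hi : i = Fin.last d <;>
      simp [hA, hi, measurableSet_Ioo])
  rw [(EuclideanSpace.volume_preserving_symm_measurableEquiv_toLp (Fin (d+1))).measure_preimage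
    hmeas.nullMeasurableSet]
  rw [volume_pi_pi]
  have hv : ∀ i, volume (A i) = if i = Fin.last d then ENNReal.ofReal δ else 1 := by
    intro i; by_cases hi : i = Fin.last d <;> simp [hA, hi, Real.volume_Ioo, hδ.le]
  rw [Finset.prod_congr rfl (fun i _ => hv i), Finset.prod_ite_eq' Finset.univ (Fin.last d)
    (fun _ => ENNReal.ofReal δ)]
  simp

lemma wass_nonneg {d : ℕ} (p : ℝ) (μ ν : Measure (EuclideanSpace ℝ (Fin d))) :
    0 ≤ Wass p μ ν := by
  apply Real.sInf_nonneg
  rintro c ⟨γ, _, rfl⟩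
  exact Real.rpow_nonneg (integral_nonneg fun z => Real.rpow_nonneg dist_nonneg _) _

/-- The easy direction of Kantorovich duality, for functions Lipschitz on a
set carrying both measures. -/
lemma wass_duality {d : ℕ} (μ ν : Measure (EuclideanSpace ℝ (Fin d)))
    [IsProbabilityMeasure μ] [IsProbabilityMeasure ν]
    (K : Set (EuclideanSpace ℝ (Fin d))) (hK : IsClosed K)
    (hμK : μ Kᶜ = 0) (hνK : ν Kᶜ = 0)
    {C : ℝ} (hC : ∀ x ∈ K, ∀ y ∈ K, dist x y ≤ C)
    (g : EuclideanSpace ℝ (Fin d) → ℝ) (hg : Continuous g)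
    {M : ℝ} (hM : ∀ x ∈ K, |g x| ≤ M)
    {L : ℝ} (hL : 0 ≤ L) (hLip : ∀ x ∈ K, ∀ y ∈ K, g x - g y ≤ L * dist x y) :
    (∫ x, g x ∂μ) - (∫ x, g x ∂ν) ≤ L * Wass 1 μ ν := by
  -- the set of coupling costs
  set S := { c : ℝ | ∃ γ : Measure (EuclideanSpace ℝ (Fin d) × EuclideanSpace ℝ (Fin d)),
    IsCoupling γ μ ν ∧ c = (∫ z, dist z.1 z.2 ^ (1:ℝ) ∂γ) ^ (1/(1:ℝ)) } with hS
  have hW : Wass 1 μ ν = sInf S := rfl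
  have hSne : S.Nonempty := by
    refine ⟨_, μ.prod ν, ⟨?_, ?_⟩, rfl⟩
    · rw [Measure.map_fst_prod]; simp
    · rw [Measure.map_snd_prod]; simp
  -- main estimate for an arbitrary coupling
  have hcoup : ∀ γ : Measure (EuclideanSpace ℝ (Fin d) × EuclideanSpace ℝ (Fin d)),
      IsCoupling γ μ ν →
      (∫ x, g x ∂μ) - (∫ x, g x ∂ν) ≤ L * ∫ z, dist z.1 z.2 ∂γ := by
    rintro γ ⟨hγ1, hγ2⟩
    have hγfin : IsProbabilityMeasure γ := by
      constructor
      rw [show γ Set.univ = γ (Prod.fst ⁻¹' Set.univ) by rw [Set.preimage_univ],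
        ← Measure.map_apply measurable_fst MeasurableSet.univ, hγ1, measure_univ]
    have hKm : MeasurableSet K := hK.measurableSet
    have hae1 : ∀ᵐ z ∂γ, z.1 ∈ K := by
      rw [ae_iff]
      have : {z : EuclideanSpace ℝ (Fin d) × EuclideanSpace ℝ (Fin d) | ¬ z.1 ∈ K} =
        Prod.fst ⁻¹' Kᶜ := rfl
      rw [this, ← Measure.map_apply measurable_fst hKm.compl, hγ1, hμK]
    have hae2 : ∀ᵐ z ∂γ, z.2 ∈ K := by
      rw [ae_iff]
      have : {z : EuclideanSpace ℝ (Fin d) × EuclideanSpace ℝ (Fin d) | ¬ z.2 ∈ K} =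
        Prod.snd ⁻¹' Kᶜ := rfl
      rw [this, ← Measure.map_apply measurable_snd hKm.compl, hγ2, hνK]
    have hint1 : Integrable (fun z : EuclideanSpace ℝ (Fin d) × EuclideanSpace ℝ (Fin d) =>
        g z.1) γ := by
      refine ⟨(hg.comp continuous_fst).aestronglyMeasurable, ?_⟩
      apply HasFiniteIntegral.of_bounded (C := M)
      filter_upwards [hae1] with z hz using by simpa using hM _ hz
    have hint2 : Integrable (fun z : EuclideanSpace ℝ (Fin d) × EuclideanSpace ℝ (Fin d) =>
        g z.2) γ := by
      refine ⟨(hg.comp continuous_snd).aestronglyMeasurable, ?_⟩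
      apply HasFiniteIntegral.of_bounded (C := M)
      filter_upwards [hae2] with z hz using by simpa using hM _ hz
    have hintd : Integrable (fun z : EuclideanSpace ℝ (Fin d) × EuclideanSpace ℝ (Fin d) =>
        dist z.1 z.2) γ := by
      refine ⟨(continuous_fst.dist continuous_snd).aestronglyMeasurable, ?_⟩
      apply HasFiniteIntegral.of_bounded (C := C)
      filter_upwards [hae1, hae2] with z hz1 hz2
      simpa [abs_of_nonneg dist_nonneg] using hC _ hz1 _ hz2
    have e1 : ∫ x, g x ∂μ = ∫ z, g z.1 ∂γ := by
      rw [← hγ1, integral_map measurable_fst.aemeasurable hg.aestronglyMeasurable]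
    have e2 : ∫ x, g x ∂ν = ∫ z, g z.2 ∂γ := by
      rw [← hγ2, integral_map measurable_snd.aemeasurable hg.aestronglyMeasurable]
    rw [e1, e2, ← integral_sub hint1 hint2]
    calc ∫ z, (g z.1 - g z.2) ∂γ ≤ ∫ z, L * dist z.1 z.2 ∂γ := by
          apply integral_mono_ae (hint1.sub hint2) (hintd.const_mul L)
          filter_upwards [hae1, hae2] with z hz1 hz2 using hLip _ hz1 _ hz2
      _ = L * ∫ z, dist z.1 z.2 ∂γ := integral_const_mul L _
  -- conclude via approximation of the infimum
  have key : ∀ ε : ℝ, 0 < ε →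
      (∫ x, g x ∂μ) - (∫ x, g x ∂ν) ≤ L * Wass 1 μ ν + L * ε := by
    intro ε hε
    obtain ⟨c, ⟨γ, hγ, rfl⟩, hclt⟩ := Real.lt_sInf_add_pos hSne hε
    have hsimp : (∫ z, dist z.1 z.2 ^ (1:ℝ) ∂γ) ^ (1/(1:ℝ)) = ∫ z, dist z.1 z.2 ∂γ := by
      norm_num
    rw [hsimp, ← hW] at hclt
    calc (∫ x, g x ∂μ) - (∫ x, g x ∂ν) ≤ L * ∫ z, dist z.1 z.2 ∂γ := hcoup γ hγ
      _ ≤ L * (Wass 1 μ ν + ε) := mul_le_mul_of_nonneg_left hclt.le hL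
      _ = L * Wass 1 μ ν + L * ε := by ring
  refine le_of_forall_pos_le_add fun ε hε => ?_
  have hε' : 0 < ε / (L + 1) := by positivity
  refine (key _ hε').trans ?_
  have : L * (ε / (L + 1)) ≤ ε := by
    rw [mul_div_assoc']
    rw [div_le_iff₀ (by positivity)]
    nlinarith
  linarith

lemma le_of_forall_pos_le_add' {a b : ℝ} (h : ∀ ε : ℝ, 0 < ε → a ≤ b + ε) : a ≤ b := by
  by_contra hlt
  push_neg at hlt
  have := h ((a - b)/2) (by linarith)
  linarith

lemma integrable_of_ae_bound {n : ℕ} {μ : Measure (EuclideanSpace ℝ (Fin n))}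
    [IsFiniteMeasure μ] {g : EuclideanSpace ℝ (Fin n) → ℝ} (hg : Continuous g) {M : ℝ}
    (h : ∀ᵐ x ∂μ, |g x| ≤ M) : Integrable g μ :=
  ⟨hg.aestronglyMeasurable, HasFiniteIntegral.of_bounded (h.mono fun x hx => by simpa using hx)⟩

lemma ae_mem_of_null_compl {n : ℕ} {μ : Measure (EuclideanSpace ℝ (Fin n))}
    {s : Set (EuclideanSpace ℝ (Fin n))} (h : μ sᶜ = 0) : ∀ᵐ x ∂μ, x ∈ s := by
  rw [ae_iff]; exact h

lemma main_est (d : ℕ) (kbar : ℝ) (hk : 0 < kbar)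
    (ρ0Q ρ1Q ρ0S ρ1S : Measure (EuclideanSpace ℝ (Fin (d+1))))
    (f0 f1 : EuclideanSpace ℝ (Fin (d+1)) → ℝ≥0∞)
    (h0Q : ρ0Q = (volume.restrict (boxQ d)).withDensity f0)
    (h1Q : ρ1Q = (volume.restrict (boxQ d)).withDensity f1)
    (hf0 : ∀ᵐ x ∂(volume.restrict (boxQ d)), f0 x ≤ ENNReal.ofReal kbar)
    (hf1 : ∀ᵐ x ∂(volume.restrict (boxQ d)), f1 x ≤ ENNReal.ofReal kbar)
    (h0S : ρ0S (faceS d)ᶜ = 0) (h1S : ρ1S (faceS d)ᶜ = 0)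
    (hP0 : IsProbabilityMeasure (ρ0Q + ρ0S)) (hP1 : IsProbabilityMeasure (ρ1Q + ρ1S))
    (j : EuclideanSpace ℝ (Fin (d+1)) → ℝ) (Lj B : ℝ≥0)
    (hLj : LipschitzWith Lj j) (hjB : ∀ x ∈ closure (boxQ d), |j x| ≤ B)
    {δ : ℝ} (hδ : 0 < δ) :
    (∫ x, j x ∂ρ0S) - (∫ x, j x ∂ρ1S) ≤
      ((Lj : ℝ) + B/δ) * Wass 1 (ρ0Q + ρ0S) (ρ1Q + ρ1S) + 2*(kbar * B * δ) := by
  have hB0 : (0:ℝ) ≤ B := B.coe_nonneg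
  set K := closure (boxQ d) with hKdef
  -- finiteness of the pieces
  have hfin0Q : IsFiniteMeasure ρ0Q := by
    constructor
    have h1 : ρ0Q Set.univ ≤ (ρ0Q + ρ0S) Set.univ := by
      rw [Measure.add_apply]; exact le_self_add
    rw [hP0.measure_univ] at h1
    exact lt_of_le_of_lt h1 ENNReal.one_lt_top
  have hfin1Q : IsFiniteMeasure ρ1Q := by
    constructor
    have h1 : ρ1Q Set.univ ≤ (ρ1Q + ρ1S) Set.univ := by
      rw [Measure.add_apply]; exact le_self_add
    rw [hP1.measure_univ] at h1
    exact lt_of_le_of_lt h1 ENNReal.one_lt_top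
  have hfin0S : IsFiniteMeasure ρ0S := by
    constructor
    have h1 : ρ0S Set.univ ≤ (ρ0Q + ρ0S) Set.univ := by
      rw [Measure.add_apply]; exact le_add_self
    rw [hP0.measure_univ] at h1
    exact lt_of_le_of_lt h1 ENNReal.one_lt_top
  have hfin1S : IsFiniteMeasure ρ1S := by
    constructor
    have h1 : ρ1S Set.univ ≤ (ρ1Q + ρ1S) Set.univ := by
      rw [Measure.add_apply]; exact le_add_self
    rw [hP1.measure_univ] at h1
    exact lt_of_le_of_lt h1 ENNReal.one_lt_top
  -- the cutoff function
  set g : EuclideanSpace ℝ (Fin (d+1)) → ℝ :=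
    fun x => j x * max (1 + x (Fin.last d) / δ) 0 with hgdef
  have hgcont : Continuous g := by
    apply hLj.continuous.mul
    exact (continuous_const.add ((continuous_coord (Fin.last d)).div_const δ)).max
      continuous_const
  -- χ bounds on K
  have hχ01 : ∀ x ∈ K, 0 ≤ max (1 + x (Fin.last d) / δ) 0 ∧
      max (1 + x (Fin.last d) / δ) 0 ≤ 1 := by
    intro x hx
    have hxl := (closure_boxQ_subset d hx).2
    refine ⟨le_max_right _ _, max_le ?_ zero_le_one⟩
    have : x (Fin.last d) / δ ≤ 0 := div_nonpos_iff.mpr (Or.inr ⟨hxl.2, hδ.le⟩)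
    linarith
  have hgB : ∀ x ∈ K, |g x| ≤ B := by
    intro x hx
    obtain ⟨hχ0, hχ1⟩ := hχ01 x hx
    calc |g x| = |j x| * |max (1 + x (Fin.last d) / δ) 0| := abs_mul _ _
      _ = |j x| * max (1 + x (Fin.last d) / δ) 0 := by rw [abs_of_nonneg hχ0]
      _ ≤ (B:ℝ) * 1 := mul_le_mul (hjB x hx) hχ1 hχ0 hB0
      _ = B := mul_one _
  -- Lipschitz-type estimate on K
  have hgLip : ∀ x ∈ K, ∀ y ∈ K, g x - g y ≤ ((Lj:ℝ) + B/δ) * dist x y := by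
    intro x hx y hy
    obtain ⟨hχx0, hχx1⟩ := hχ01 x hx
    obtain ⟨hχy0, hχy1⟩ := hχ01 y hy
    set χx := max (1 + x (Fin.last d) / δ) 0
    set χy := max (1 + y (Fin.last d) / δ) 0
    have h1 : |j x - j y| ≤ (Lj:ℝ) * dist x y := by
      have := hLj.dist_le_mul x y
      rwa [Real.dist_eq] at this
    have h4 : |χx - χy| ≤ dist x y / δ := by
      calc |χx - χy| ≤ |(1 + x (Fin.last d) / δ) - (1 + y (Fin.last d) / δ)| :=
            abs_max_sub_max_le_abs _ _ _
        _ = |x (Fin.last d) - y (Fin.last d)| / δ := by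
            rw [show (1 + x (Fin.last d) / δ) - (1 + y (Fin.last d) / δ)
              = (x (Fin.last d) - y (Fin.last d)) / δ by ring, abs_div, abs_of_pos hδ]
        _ ≤ dist x y / δ := by
            gcongr
            exact coord_dist_le x y _
    have t1 : (j x - j y) * χx ≤ (Lj:ℝ) * dist x y := by
      calc (j x - j y) * χx ≤ |(j x - j y) * χx| := le_abs_self _
        _ = |j x - j y| * |χx| := abs_mul _ _
        _ = |j x - j y| * χx := by rw [abs_of_nonneg hχx0]
        _ ≤ ((Lj:ℝ) * dist x y) * 1 := mul_le_mul h1 hχx1 hχx0 (by positivity)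
        _ = (Lj:ℝ) * dist x y := mul_one _
    have t2 : j y * (χx - χy) ≤ (B:ℝ) * (dist x y / δ) := by
      calc j y * (χx - χy) ≤ |j y * (χx - χy)| := le_abs_self _
        _ = |j y| * |χx - χy| := abs_mul _ _
        _ ≤ (B:ℝ) * (dist x y / δ) :=
            mul_le_mul (hjB y hy) h4 (abs_nonneg _) hB0
    have hring : g x - g y = (j x - j y) * χx + j y * (χx - χy) := by
      simp only [hgdef]; ring
    have : ((Lj:ℝ) + B/δ) * dist x y = (Lj:ℝ) * dist x y + (B:ℝ) * (dist x y / δ) := by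
      field_simp
    linarith
  -- g agrees with j on faceS
  have hgj : ∀ x ∈ faceS d, g x = j x := by
    intro x hx
    simp only [hgdef, hx.2]
    norm_num
  -- null complements
  have hQnull : ∀ (ρQ : Measure (EuclideanSpace ℝ (Fin (d+1))))
      (f : EuclideanSpace ℝ (Fin (d+1)) → ℝ≥0∞),
      ρQ = (volume.restrict (boxQ d)).withDensity f → ρQ (boxQ d)ᶜ = 0 := by
    intro ρQ f hQ
    rw [hQ, withDensity_apply _ (isOpen_boxQ d).measurableSet.compl,
      Measure.restrict_restrict (isOpen_boxQ d).measurableSet.compl, Set.compl_inter_self,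
      Measure.restrict_empty]
    simp
  have hQK : ∀ (ρQ : Measure (EuclideanSpace ℝ (Fin (d+1))))
      (f : EuclideanSpace ℝ (Fin (d+1)) → ℝ≥0∞),
      ρQ = (volume.restrict (boxQ d)).withDensity f → ρQ Kᶜ = 0 := by
    intro ρQ f hQ
    exact measure_mono_null (Set.compl_subset_compl.mpr subset_closure) (hQnull ρQ f hQ)
  have hSK : ∀ (ρS : Measure (EuclideanSpace ℝ (Fin (d+1)))), ρS (faceS d)ᶜ = 0 →
      ρS Kᶜ = 0 := fun ρS hS =>
    measure_mono_null (Set.compl_subset_compl.mpr (faceS_subset_closure d)) hS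
  -- the Q-part estimate
  have hQest : ∀ (ρQ : Measure (EuclideanSpace ℝ (Fin (d+1))))
      (f : EuclideanSpace ℝ (Fin (d+1)) → ℝ≥0∞),
      ρQ = (volume.restrict (boxQ d)).withDensity f →
      (∀ᵐ x ∂(volume.restrict (boxQ d)), f x ≤ ENNReal.ofReal kbar) →
      IsFiniteMeasure ρQ →
      |∫ x, g x ∂ρQ| ≤ kbar * B * δ := by
    intro ρQ f hQ hf hfin
    haveI := hfin
    set U : Set (EuclideanSpace ℝ (Fin (d+1))) := {x | -δ < x (Fin.last d)} with hUdef
    have hUm : MeasurableSet U := by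
      have : U = (fun x : EuclideanSpace ℝ (Fin (d+1)) => x (Fin.last d)) ⁻¹' Set.Ioi (-δ) := rfl
      rw [this]
      exact (continuous_coord (Fin.last d)).measurable measurableSet_Ioi
    have hgind : g = Set.indicator U g := by
      funext x
      by_cases hxU : x ∈ U
      · rw [Set.indicator_of_mem hxU]
      · rw [Set.indicator_of_notMem hxU]
        have hxl : x (Fin.last d) ≤ -δ := by
          simp only [hUdef, Set.mem_setOf_eq, not_lt] at hxU
          exact hxU
        have : 1 + x (Fin.last d) / δ ≤ 0 := by
          have : x (Fin.last d) / δ ≤ -1 := by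
            rw [div_le_iff₀ hδ]; linarith
          linarith
        simp only [hgdef]
        rw [max_eq_right this, mul_zero]
    have haeQ : ∀ᵐ x ∂ρQ, x ∈ boxQ d := ae_mem_of_null_compl (hQnull ρQ f hQ)
    have hnorm : ‖∫ x in U, g x ∂ρQ‖ ≤ (B:ℝ) * (ρQ.restrict U Set.univ).toReal := by
      apply norm_integral_le_of_norm_le_const
      apply ae_restrict_of_ae
      filter_upwards [haeQ] with x hx
      simpa using hgB x (subset_closure hx)
    have hμU : ρQ U ≤ ENNReal.ofReal (kbar * δ) := by
      rw [hQ, withDensity_apply _ hUm, Measure.restrict_restrict hUm]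
      calc ∫⁻ x, f x ∂(volume.restrict (U ∩ boxQ d))
          ≤ ∫⁻ _x, ENNReal.ofReal kbar ∂(volume.restrict (U ∩ boxQ d)) := by
            apply lintegral_mono_ae
            exact ae_mono (Measure.restrict_mono Set.inter_subset_right le_rfl) hf
        _ = ENNReal.ofReal kbar * volume (U ∩ boxQ d) := by
            rw [lintegral_const, Measure.restrict_apply_univ]
        _ ≤ ENNReal.ofReal kbar * ENNReal.ofReal δ := by
            apply mul_le_mul_right ?_ _
            rw [Set.inter_comm]
            exact volume_strip d hδ
        _ = ENNReal.ofReal (kbar * δ) := by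
            rw [← ENNReal.ofReal_mul hk.le]
    have hkey : ∫ x, g x ∂ρQ = ∫ x in U, g x ∂ρQ := by
      conv_lhs => rw [hgind]
      exact integral_indicator hUm
    calc |∫ x, g x ∂ρQ| = ‖∫ x in U, g x ∂ρQ‖ := by
          rw [hkey, Real.norm_eq_abs]
      _ ≤ (B:ℝ) * (ρQ.restrict U Set.univ).toReal := hnorm
      _ ≤ (B:ℝ) * (kbar * δ) := by
          apply mul_le_mul_of_nonneg_left ?_ hB0
          rw [Measure.restrict_apply_univ]
          calc (ρQ U).toReal ≤ (ENNReal.ofReal (kbar * δ)).toReal := by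
                apply ENNReal.toReal_mono (by simp) hμU
            _ = kbar * δ := ENNReal.toReal_ofReal (by positivity)
      _ = kbar * B * δ := by ring
  -- integrability
  have hintQ : ∀ (ρQ : Measure (EuclideanSpace ℝ (Fin (d+1))))
      (f : EuclideanSpace ℝ (Fin (d+1)) → ℝ≥0∞),
      ρQ = (volume.restrict (boxQ d)).withDensity f → IsFiniteMeasure ρQ →
      Integrable g ρQ := by
    intro ρQ f hQ hfin
    haveI := hfin
    apply integrable_of_ae_bound hgcont (M := (B:ℝ))
    filter_upwards [ae_mem_of_null_compl (hQnull ρQ f hQ)] with x hx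
    exact hgB x (subset_closure hx)
  have hintS : ∀ (ρS : Measure (EuclideanSpace ℝ (Fin (d+1)))), ρS (faceS d)ᶜ = 0 →
      IsFiniteMeasure ρS → Integrable g ρS ∧ Integrable j ρS ∧
        ∫ x, g x ∂ρS = ∫ x, j x ∂ρS := by
    intro ρS hS hfin
    haveI := hfin
    have hae : ∀ᵐ x ∂ρS, x ∈ faceS d := ae_mem_of_null_compl hS
    have hgS : Integrable g ρS := by
      apply integrable_of_ae_bound hgcont (M := (B:ℝ))
      filter_upwards [hae] with x hx
      exact hgB x (faceS_subset_closure d hx)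
    have hjS : Integrable j ρS := by
      apply integrable_of_ae_bound hLj.continuous (M := (B:ℝ))
      filter_upwards [hae] with x hx
      exact hjB x (faceS_subset_closure d hx)
    refine ⟨hgS, hjS, integral_congr_ae ?_⟩
    filter_upwards [hae] with x hx
    exact hgj x hx
  obtain ⟨hint0S, _hint0j, heq0⟩ := hintS ρ0S h0S hfin0S
  obtain ⟨hint1S, _hint1j, heq1⟩ := hintS ρ1S h1S hfin1S
  have hint0Q := hintQ ρ0Q f0 h0Q hfin0Q
  have hint1Q := hintQ ρ1Q f1 h1Q hfin1Q
  -- split integrals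
  have hsplit0 : ∫ x, g x ∂(ρ0Q + ρ0S) = (∫ x, g x ∂ρ0Q) + ∫ x, g x ∂ρ0S :=
    integral_add_measure hint0Q hint0S
  have hsplit1 : ∫ x, g x ∂(ρ1Q + ρ1S) = (∫ x, g x ∂ρ1Q) + ∫ x, g x ∂ρ1S :=
    integral_add_measure hint1Q hint1S
  -- duality
  have hμK : (ρ0Q + ρ0S) Kᶜ = 0 := by
    rw [Measure.add_apply, hQK ρ0Q f0 h0Q, hSK ρ0S h0S, add_zero]
  have hνK : (ρ1Q + ρ1S) Kᶜ = 0 := by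
    rw [Measure.add_apply, hQK ρ1Q f1 h1Q, hSK ρ1S h1S, add_zero]
  have hC : ∀ x ∈ K, ∀ y ∈ K, dist x y ≤ 2 * Real.sqrt (d+1) := by
    intro x hx y hy
    calc dist x y = ‖x - y‖ := dist_eq_norm x y
      _ ≤ ‖x‖ + ‖y‖ := norm_sub_le x y
      _ ≤ 2 * Real.sqrt (d+1) := by
          linarith [norm_le_of_mem_closure d hx, norm_le_of_mem_closure d hy]
  have hL0 : (0:ℝ) ≤ (Lj:ℝ) + B/δ := by positivity
  have hdual := wass_duality (ρ0Q + ρ0S) (ρ1Q + ρ1S) K isClosed_closure hμK hνK hC g hgcont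
    hgB hL0 hgLip
  -- combine
  have habs0 := hQest ρ0Q f0 h0Q hf0 hfin0Q
  have habs1 := hQest ρ1Q f1 h1Q hf1 hfin1Q
  rw [hsplit0, hsplit1] at hdual
  rw [← heq0, ← heq1]
  have habs0' := abs_le.mp habs0
  have habs1' := abs_le.mp habs1
  linarith [habs0'.1, habs0'.2, habs1'.1, habs1'.2]

theorem stmt2 (d : ℕ) (kbar : ℝ) (hk : 0 < kbar) :
    ∃ c : ℝ, 0 ≤ c ∧
      ∀ (ρ0Q ρ1Q ρ0S ρ1S : Measure (EuclideanSpace ℝ (Fin (d+1))))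
        (f0 f1 : EuclideanSpace ℝ (Fin (d+1)) → ℝ≥0∞),
        ρ0Q = (volume.restrict (boxQ d)).withDensity f0 →
        ρ1Q = (volume.restrict (boxQ d)).withDensity f1 →
        (∀ᵐ x ∂(volume.restrict (boxQ d)), f0 x ≤ ENNReal.ofReal kbar) →
        (∀ᵐ x ∂(volume.restrict (boxQ d)), f1 x ≤ ENNReal.ofReal kbar) →
        ρ0S (faceS d)ᶜ = 0 → ρ1S (faceS d)ᶜ = 0 →
        IsProbabilityMeasure (ρ0Q + ρ0S) → IsProbabilityMeasure (ρ1Q + ρ1S) →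
        ∀ (j : EuclideanSpace ℝ (Fin (d+1)) → ℝ) (Lj B : ℝ≥0),
          LipschitzWith Lj j → (∀ x ∈ closure (boxQ d), |j x| ≤ B) →
          (∫ x, j x ∂ρ0S) - (∫ x, j x ∂ρ1S) ≤
            (Lj : ℝ) * Wass 1 (ρ0Q + ρ0S) (ρ1Q + ρ1S)
              + c * B * (Wass 1 (ρ0Q + ρ0S) (ρ1Q + ρ1S)) ^ (1/2 : ℝ) := by
  refine ⟨2*kbar + 1, by positivity, ?_⟩
  intro ρ0Q ρ1Q ρ0S ρ1S f0 f1 h0Q h1Q hf0 hf1 h0S h1S hP0 hP1 j Lj B hLj hjB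
  set ℓ := Wass 1 (ρ0Q + ρ0S) (ρ1Q + ρ1S) with hl
  have hl0 : 0 ≤ ℓ := wass_nonneg 1 _ _
  have hB0 : (0:ℝ) ≤ B := B.coe_nonneg
  have est : ∀ δ : ℝ, 0 < δ →
      (∫ x, j x ∂ρ0S) - (∫ x, j x ∂ρ1S) ≤ ((Lj:ℝ) + B/δ)*ℓ + 2*(kbar*B*δ) :=
    fun δ hδ => main_est d kbar hk ρ0Q ρ1Q ρ0S ρ1S f0 f1 h0Q h1Q hf0 hf1 h0S h1S hP0 hP1
      j Lj B hLj hjB hδ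
  rcases eq_or_lt_of_le hl0 with heq | hpos
  · have hz : (Lj:ℝ) * ℓ + (2*kbar+1) * B * ℓ ^ (1/2:ℝ) = 0 := by
      rw [← heq, Real.zero_rpow (by norm_num : (1/2:ℝ) ≠ 0)]
      ring
    rw [hz]
    apply le_of_forall_pos_le_add'
    intro ε hε
    have hD : (0:ℝ) < 2*kbar*B+1 := by positivity
    have hδ : 0 < ε/(2*kbar*B+1) := by positivity
    have h := est _ hδ
    rw [← heq] at h
    have h2 : 2*(kbar*(B:ℝ)*(ε/(2*kbar*B+1))) ≤ ε := by
      rw [show 2*(kbar*(B:ℝ)*(ε/(2*kbar*B+1))) = (2*kbar*B)*ε/(2*kbar*B+1) by ring,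
        div_le_iff₀ hD]
      nlinarith
    have h3 : ((Lj:ℝ) + B/(ε/(2*kbar*B+1)))*0 = 0 := mul_zero _
    linarith
  · have hδ : 0 < Real.sqrt ℓ := Real.sqrt_pos.mpr hpos
    have h := est _ hδ
    calc (∫ x, j x ∂ρ0S) - (∫ x, j x ∂ρ1S)
        ≤ ((Lj:ℝ) + B/Real.sqrt ℓ)*ℓ + 2*(kbar*B*Real.sqrt ℓ) := h
      _ = (Lj:ℝ)*ℓ + (B:ℝ)*(ℓ/Real.sqrt ℓ) + 2*kbar*B*Real.sqrt ℓ := by ring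
      _ = (Lj:ℝ)*ℓ + (2*kbar+1)*B*Real.sqrt ℓ := by rw [Real.div_sqrt]; ring
      _ = (Lj:ℝ)*ℓ + (2*kbar+1)*B*ℓ^(1/2:ℝ) := by rw [← Real.sqrt_eq_rpow]
end

section
/- Let Ω ⊂ ℝ^d be a bounded domain, Γ_out a portion of its boundary, and suppose there is a constant c > 0 such that for all t > 0, the Lebesgue measure of {x ∈ Ω : d(x, Γ_out) ≤ t} is at most c·t. Let μ, ν be admissible measures (each the sum of an absolutely continuous part on Ω with density ≤ 1 and a singular part on Γ_out), and set E = |μ(Γ_out) − ν(Γ_out)|. Then E ≤ C·W₂(μ, ν)^{2/3}, where C depends only on c and the geometry. -/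
open MeasureTheory
open scoped ENNReal NNReal

private lemma coreA {d : ℕ} (Ω : Set (EuclideanSpace ℝ (Fin d)))
    (hΩo : IsOpen Ω) (hΩb : Bornology.IsBounded Ω)
    (Γout : Set (EuclideanSpace ℝ (Fin d))) (hΓ : Γout ⊆ frontier Ω)
    (c : ℝ) (hc : 0 < c)
    (hlayer : ∀ t : ℝ, 0 < t →
      (volume {x ∈ Ω | Metric.infDist x Γout ≤ t}).toReal ≤ c * t)
    (μ ν μΩ' νΩ' μS νS : Measure (EuclideanSpace ℝ (Fin d)))
    (fμ fν : EuclideanSpace ℝ (Fin d) → ℝ≥0∞)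
    (hμd : μ = μΩ' + μS) (hνd : ν = νΩ' + νS)
    (hμΩ : μΩ' = (volume.restrict Ω).withDensity fμ)
    (hνΩ : νΩ' = (volume.restrict Ω).withDensity fν)
    (hfμ : ∀ᵐ x ∂(volume.restrict Ω), fμ x ≤ 1)
    (hfν : ∀ᵐ x ∂(volume.restrict Ω), fν x ≤ 1)
    (hμS : μS Γoutᶜ = 0) (hνS : νS Γoutᶜ = 0)
    (hμp : IsProbabilityMeasure μ) (hνp : IsProbabilityMeasure ν)
    (hle : ν Γout ≤ μ Γout)
    (γ : Measure (EuclideanSpace ℝ (Fin d) × EuclideanSpace ℝ (Fin d)))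
    (hγ : IsCoupling γ μ ν) :
    ((μ Γout).toReal - (ν Γout).toReal) ^ 3 / (8 * c ^ 2) ≤ ∫ z, dist z.1 z.2 ^ (2:ℝ) ∂γ := by
  classical
  obtain ⟨hγ1, hγ2⟩ := hγ
  have hrw : ∀ x : ℝ, x ^ (2:ℝ) = x ^ (2:ℕ) := fun x => by
    rw [show (2:ℝ) = ((2:ℕ):ℝ) by norm_num, Real.rpow_natCast]
  simp_rw [hrw]
  -- density domination
  have hνΩle : νΩ' ≤ volume.restrict Ω := by
    rw [hνΩ]
    calc (volume.restrict Ω).withDensity fν ≤ (volume.restrict Ω).withDensity 1 :=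
          withDensity_mono hfν
      _ = volume.restrict Ω := withDensity_one
  have hμΩle : μΩ' ≤ volume.restrict Ω := by
    rw [hμΩ]
    calc (volume.restrict Ω).withDensity fμ ≤ (volume.restrict Ω).withDensity 1 :=
          withDensity_mono hfμ
      _ = volume.restrict Ω := withDensity_one
  -- measurable hull of Γout inside closure Γout
  set T := toMeasurable (μ + ν) Γout with hT
  have hTm : MeasurableSet T := measurableSet_toMeasurable _ _
  set G := T ∩ closure Γout with hG
  have hGm : MeasurableSet G := hTm.inter measurableSet_closure
  have hΓG : Γout ⊆ G := Set.subset_inter (subset_toMeasurable _ _) subset_closure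
  have hTsum : μ T + ν T = μ Γout + ν Γout := by
    have h0 := measure_toMeasurable (μ := μ + ν) Γout
    rw [Measure.add_apply, Measure.add_apply] at h0
    exact h0
  have hμTle : μ T ≤ μ Γout := by
    have h3 : μ T + ν Γout ≤ μ Γout + ν Γout := by
      calc μ T + ν Γout ≤ μ T + ν T := add_le_add_right (measure_mono (subset_toMeasurable _ _)) _
        _ = μ Γout + ν Γout := hTsum
    exact ENNReal.le_of_add_le_add_right (measure_ne_top ν _) h3
  have hνTle : ν T ≤ ν Γout := by
    have h3 : μ Γout + ν T ≤ μ Γout + ν Γout := by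
      calc μ Γout + ν T ≤ μ T + ν T := add_le_add_left (measure_mono (subset_toMeasurable _ _)) _
        _ = μ Γout + ν Γout := hTsum
    exact ENNReal.le_of_add_le_add_left (measure_ne_top μ _) h3
  have hμG : μ G = μ Γout :=
    le_antisymm (le_trans (measure_mono Set.inter_subset_left) hμTle) (measure_mono hΓG)
  have hνG : ν G = ν Γout :=
    le_antisymm (le_trans (measure_mono Set.inter_subset_left) hνTle) (measure_mono hΓG)
  -- marginals
  have hγfst : ∀ s : Set (EuclideanSpace ℝ (Fin d)), MeasurableSet s →
      γ (s ×ˢ Set.univ) = μ s := by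
    intro s hs
    rw [← hγ1, Measure.map_apply measurable_fst hs]
    congr 1
    ext z; simp
  have hγsnd : ∀ s : Set (EuclideanSpace ℝ (Fin d)), MeasurableSet s →
      γ (Set.univ ×ˢ s) = ν s := by
    intro s hs
    rw [← hγ2, Measure.map_apply measurable_snd hs]
    congr 1
    ext z; simp
  -- mass from G to outside of G
  have key1 : μ G - ν G ≤ γ (G ×ˢ Gᶜ) := by
    have h1 : γ (G ×ˢ Set.univ) = μ G := hγfst G hGm
    have h2 : γ (G ×ˢ G) ≤ ν G := by
      calc γ (G ×ˢ G) ≤ γ (Set.univ ×ˢ G) :=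
            measure_mono (Set.prod_mono_left (Set.subset_univ _))
        _ = ν G := hγsnd G hGm
    have h3 : μ G ≤ γ (G ×ˢ Gᶜ) + ν G := by
      rw [← h1]
      calc γ (G ×ˢ Set.univ) = γ (G ×ˢ G ∪ G ×ˢ Gᶜ) := by
            rw [← Set.prod_union, Set.union_compl_self]
        _ ≤ γ (G ×ˢ G) + γ (G ×ˢ Gᶜ) := measure_union_le _ _
        _ ≤ ν G + γ (G ×ˢ Gᶜ) := add_le_add_left h2 _
        _ = γ (G ×ˢ Gᶜ) + ν G := add_comm _ _
    exact tsub_le_iff_right.mpr h3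
  -- the measure σ : mass transported from G to Gᶜ, seen at its destination
  set σ : Measure (EuclideanSpace ℝ (Fin d)) :=
    Measure.map Prod.snd (γ.restrict (G ×ˢ Gᶜ)) with hσ
  have hσ_apply : ∀ A : Set (EuclideanSpace ℝ (Fin d)), MeasurableSet A →
      σ A = γ ((Prod.snd ⁻¹' A) ∩ G ×ˢ Gᶜ) := by
    intro A hA
    rw [hσ, Measure.map_apply measurable_snd hA,
      Measure.restrict_apply (measurable_snd hA)]
  set E : ℝ := (μ Γout).toReal - (ν Γout).toReal with hE
  have hσuniv : ENNReal.ofReal E ≤ σ Set.univ := by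
    have h1 : σ Set.univ = γ (G ×ˢ Gᶜ) := by
      rw [hσ_apply Set.univ MeasurableSet.univ]
      congr 1
      simp
    have h2 : ENNReal.ofReal E = μ G - ν G := by
      rw [hE, hμG, hνG, ← ENNReal.toReal_sub_of_le hle (measure_ne_top μ _),
        ENNReal.ofReal_toReal]
      exact (tsub_le_self.trans_lt (measure_lt_top μ _)).ne
    rw [h1, h2]
    exact key1
  have hσle : ∀ A : Set (EuclideanSpace ℝ (Fin d)), MeasurableSet A →
      σ A ≤ volume.restrict Ω A := by
    intro A hA
    rw [hσ_apply A hA]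
    have hsub : (Prod.snd ⁻¹' A) ∩ G ×ˢ Gᶜ ⊆ Set.univ ×ˢ (A ∩ Gᶜ) := by
      rintro ⟨x, y⟩ ⟨hy, hx, hyc⟩
      exact ⟨Set.mem_univ _, hy, hyc⟩
    calc γ ((Prod.snd ⁻¹' A) ∩ G ×ˢ Gᶜ) ≤ γ (Set.univ ×ˢ (A ∩ Gᶜ)) := measure_mono hsub
      _ = ν (A ∩ Gᶜ) := hγsnd _ (hA.inter hGm.compl)
      _ = νΩ' (A ∩ Gᶜ) + νS (A ∩ Gᶜ) := by rw [hνd]; rfl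
      _ ≤ νΩ' (A ∩ Gᶜ) + 0 := by
          gcongr
          have hsub2 : A ∩ Gᶜ ⊆ Γoutᶜ := fun x hx hmem => hx.2 (hΓG hmem)
          exact le_trans (measure_mono hsub2) (le_of_eq hνS)
      _ = νΩ' (A ∩ Gᶜ) := add_zero _
      _ ≤ volume.restrict Ω (A ∩ Gᶜ) := hνΩle _
      _ ≤ volume.restrict Ω A := measure_mono Set.inter_subset_left
  have hE0 : 0 ≤ E := by
    rw [hE]
    have := ENNReal.toReal_mono (measure_ne_top μ _) hle
    linarith
  rcases eq_or_lt_of_le hE0 with hE0' | hEpos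
  · have hz : E ^ 3 / (8 * c ^ 2) = 0 := by rw [← hE0']; ring
    rw [hz]
    exact integral_nonneg fun z => by positivity
  -- E > 0 case
  set t : ℝ := E / (2 * c) with ht
  have htpos : 0 < t := by positivity
  set St : Set (EuclideanSpace ℝ (Fin d)) := {y | Metric.infDist y Γout ≤ t} with hSt
  have hStm : MeasurableSet St :=
    (isClosed_le (Metric.continuous_infDist_pt Γout) continuous_const).measurableSet
  have hσSt : σ St ≤ ENNReal.ofReal (E / 2) := by
    have h1 : σ St ≤ volume (St ∩ Ω) := by
      have := hσle St hStm
      rwa [Measure.restrict_apply hStm] at this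
    have h2 : St ∩ Ω = {x ∈ Ω | Metric.infDist x Γout ≤ t} := by
      ext x; exact ⟨fun h => ⟨h.2, h.1⟩, fun h => ⟨h.2, h.1⟩⟩
    have h3 : volume (St ∩ Ω) ≠ ⊤ :=
      ne_of_lt (lt_of_le_of_lt (measure_mono Set.inter_subset_right) hΩb.measure_lt_top)
    have h4 : (volume (St ∩ Ω)).toReal ≤ c * t := by rw [h2]; exact hlayer t htpos
    have h5 : c * t = E / 2 := by rw [ht]; field_simp
    refine le_trans h1 ?_
    rw [← h5]
    exact (ENNReal.le_ofReal_iff_toReal_le h3 (by positivity)).mpr h4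
  have hσfar : ENNReal.ofReal (E / 2) ≤ σ Stᶜ := by
    have h1 : σ Set.univ ≤ σ St + σ Stᶜ := by
      calc σ Set.univ = σ (St ∪ Stᶜ) := by rw [Set.union_compl_self]
        _ ≤ σ St + σ Stᶜ := measure_union_le _ _
    have h2 : σ Set.univ - σ St ≤ σ Stᶜ := tsub_le_iff_left.mpr h1
    have h3 : ENNReal.ofReal E - ENNReal.ofReal (E/2) ≤ σ Set.univ - σ St :=
      tsub_le_tsub hσuniv hσSt
    have h4 : ENNReal.ofReal E - ENNReal.ofReal (E/2) = ENNReal.ofReal (E/2) := by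
      rw [← ENNReal.ofReal_sub _ (by positivity : (0:ℝ) ≤ E/2)]
      congr 1; ring
    calc ENNReal.ofReal (E/2) = ENNReal.ofReal E - ENNReal.ofReal (E/2) := h4.symm
      _ ≤ σ Set.univ - σ St := h3
      _ ≤ σ Stᶜ := h2
  -- lower bound on the lintegral of infDist² under σ
  set g : EuclideanSpace ℝ (Fin d) → ℝ≥0∞ :=
    fun y => ENNReal.ofReal (Metric.infDist y Γout ^ 2) with hg
  have hgmeas : Measurable g :=
    ENNReal.measurable_ofReal.comp ((Metric.continuous_infDist_pt Γout).pow 2).measurable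
  have hL' : ENNReal.ofReal (E ^ 3 / (8 * c ^ 2)) ≤ ∫⁻ y, g y ∂σ := by
    have h1 : ∫⁻ y in Stᶜ, g y ∂σ ≤ ∫⁻ y, g y ∂σ := setLIntegral_le_lintegral _ _
    have h2 : ∫⁻ y in Stᶜ, ENNReal.ofReal (t ^ 2) ∂σ ≤ ∫⁻ y in Stᶜ, g y ∂σ := by
      refine setLIntegral_mono hgmeas ?_
      intro y hy
      have hlt : t < Metric.infDist y Γout := not_le.mp hy
      exact ENNReal.ofReal_le_ofReal (by nlinarith)
    have h3 : ∫⁻ y in Stᶜ, ENNReal.ofReal (t ^ 2) ∂σ = ENNReal.ofReal (t ^ 2) * σ Stᶜ :=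
      setLIntegral_const _ _
    have h5 : ENNReal.ofReal (t ^ 2) * ENNReal.ofReal (E / 2)
        = ENNReal.ofReal (E ^ 3 / (8 * c ^ 2)) := by
      rw [← ENNReal.ofReal_mul (by positivity)]
      congr 1
      rw [ht]; field_simp; ring
    calc ENNReal.ofReal (E ^ 3 / (8 * c ^ 2))
        = ENNReal.ofReal (t ^ 2) * ENNReal.ofReal (E / 2) := h5.symm
      _ ≤ ENNReal.ofReal (t ^ 2) * σ Stᶜ := mul_le_mul_right hσfar _
      _ = ∫⁻ y in Stᶜ, ENNReal.ofReal (t ^ 2) ∂σ := h3.symm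
      _ ≤ ∫⁻ y in Stᶜ, g y ∂σ := h2
      _ ≤ ∫⁻ y, g y ∂σ := h1
  -- transfer to the lintegral of dist² under γ
  have hL : ∫⁻ y, g y ∂σ ≤ ∫⁻ z, ENNReal.ofReal (dist z.1 z.2 ^ 2) ∂γ := by
    have h1 : ∫⁻ y, g y ∂σ = ∫⁻ z, g z.2 ∂(γ.restrict (G ×ˢ Gᶜ)) :=
      lintegral_map hgmeas measurable_snd
    have h2 : ∫⁻ z in G ×ˢ Gᶜ, g z.2 ∂γ
        ≤ ∫⁻ z in G ×ˢ Gᶜ, ENNReal.ofReal (dist z.1 z.2 ^ 2) ∂γ := by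
      refine setLIntegral_mono
        (ENNReal.measurable_ofReal.comp ((measurable_fst.dist measurable_snd).pow_const 2)) ?_
      rintro ⟨x, y⟩ ⟨hx, hy⟩
      have hxc : x ∈ closure Γout := hx.2
      have h3 : Metric.infDist y Γout ≤ dist x y := by
        rw [← Metric.infDist_closure]
        exact (Metric.infDist_le_dist_of_mem hxc).trans_eq (dist_comm y x)
      have h4 : (0:ℝ) ≤ Metric.infDist y Γout := Metric.infDist_nonneg
      exact ENNReal.ofReal_le_ofReal (by nlinarith)
    have h3 : ∫⁻ z in G ×ˢ Gᶜ, ENNReal.ofReal (dist z.1 z.2 ^ 2) ∂γ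
        ≤ ∫⁻ z, ENNReal.ofReal (dist z.1 z.2 ^ 2) ∂γ := setLIntegral_le_lintegral _ _
    rw [h1]
    exact le_trans h2 h3
  -- boundedness and integrability
  haveI hγprob : IsProbabilityMeasure γ := by
    constructor
    have : (Set.univ : Set (EuclideanSpace ℝ (Fin d) × EuclideanSpace ℝ (Fin d)))
        = Set.univ ×ˢ Set.univ := by simp
    rw [this, hγfst _ MeasurableSet.univ]
    exact measure_univ
  set K := closure Ω with hK
  have hKm : MeasurableSet K := measurableSet_closure
  have hΓK : Γout ⊆ K := fun x hx => frontier_subset_closure (hΓ hx)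
  have hμK : μ Kᶜ = 0 := by
    rw [hμd, Measure.add_apply]
    have h1 : μΩ' Kᶜ = 0 := by
      refine le_antisymm ?_ (zero_le)
      calc μΩ' Kᶜ ≤ volume.restrict Ω Kᶜ := hμΩle _
        _ = volume (Kᶜ ∩ Ω) := Measure.restrict_apply hKm.compl
        _ = 0 := by
            rw [show Kᶜ ∩ Ω = ∅ from Set.eq_empty_iff_forall_notMem.mpr
              fun x hx => hx.1 (subset_closure hx.2)]
            simp
    have h2 : μS Kᶜ = 0 := by
      refine le_antisymm ?_ (zero_le)
      refine le_trans (measure_mono fun x hx hmem => hx (hΓK hmem)) (le_of_eq hμS)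
    rw [h1, h2]; simp
  have hνK : ν Kᶜ = 0 := by
    rw [hνd, Measure.add_apply]
    have h1 : νΩ' Kᶜ = 0 := by
      refine le_antisymm ?_ (zero_le)
      calc νΩ' Kᶜ ≤ volume.restrict Ω Kᶜ := hνΩle _
        _ = volume (Kᶜ ∩ Ω) := Measure.restrict_apply hKm.compl
        _ = 0 := by
            rw [show Kᶜ ∩ Ω = ∅ from Set.eq_empty_iff_forall_notMem.mpr
              fun x hx => hx.1 (subset_closure hx.2)]
            simp
    have h2 : νS Kᶜ = 0 := by
      refine le_antisymm ?_ (zero_le)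
      refine le_trans (measure_mono fun x hx hmem => hx (hΓK hmem)) (le_of_eq hνS)
    rw [h1, h2]; simp
  have hγK : γ ((K ×ˢ K)ᶜ) = 0 := by
    have hsub : (K ×ˢ K)ᶜ ⊆ (Kᶜ ×ˢ Set.univ) ∪ (Set.univ ×ˢ Kᶜ) := by
      rintro ⟨x, y⟩ hz
      rw [Set.mem_compl_iff, Set.mem_prod] at hz
      push_neg at hz
      by_cases hx : x ∈ K
      · exact Or.inr ⟨Set.mem_univ _, hz hx⟩
      · exact Or.inl ⟨hx, Set.mem_univ _⟩
    refine le_antisymm ?_ (zero_le)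
    calc γ ((K ×ˢ K)ᶜ) ≤ γ (Kᶜ ×ˢ Set.univ) + γ (Set.univ ×ˢ Kᶜ) :=
          le_trans (measure_mono hsub) (measure_union_le _ _)
      _ = μ Kᶜ + ν Kᶜ := by rw [hγfst _ hKm.compl, hγsnd _ hKm.compl]
      _ = 0 := by rw [hμK, hνK]; simp
  have hf_cont : Continuous fun z : EuclideanSpace ℝ (Fin d) × EuclideanSpace ℝ (Fin d) =>
      dist z.1 z.2 ^ 2 := (continuous_fst.dist continuous_snd).pow 2
  have hbd : ∀ᵐ z ∂γ, ‖dist z.1 z.2 ^ 2‖ ≤ Metric.diam K ^ 2 := by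
    have hae : ∀ᵐ z ∂γ, z ∈ K ×ˢ K := by
      rw [ae_iff]
      exact hγK
    filter_upwards [hae] with z hz
    have hd : dist z.1 z.2 ≤ Metric.diam K := Metric.dist_le_diam_of_mem hΩb.closure hz.1 hz.2
    rw [Real.norm_eq_abs, abs_of_nonneg (by positivity)]
    nlinarith [dist_nonneg (x := z.1) (y := z.2)]
  have hint : Integrable (fun z : EuclideanSpace ℝ (Fin d) × EuclideanSpace ℝ (Fin d) =>
      dist z.1 z.2 ^ 2) γ :=
    Integrable.mono' (integrable_const _) hf_cont.aestronglyMeasurable hbd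
  have hiden : ENNReal.ofReal (∫ z, dist z.1 z.2 ^ 2 ∂γ)
      = ∫⁻ z, ENNReal.ofReal (dist z.1 z.2 ^ 2) ∂γ :=
    ofReal_integral_eq_lintegral_ofReal hint (Filter.Eventually.of_forall fun z => by positivity)
  have hfin : ENNReal.ofReal (E ^ 3 / (8 * c ^ 2))
      ≤ ENNReal.ofReal (∫ z, dist z.1 z.2 ^ 2 ∂γ) := by
    rw [hiden]
    exact hL'.trans hL
  exact (ENNReal.ofReal_le_ofReal_iff (integral_nonneg fun z => by positivity)).mp hfin

theorem stmt5 {d : ℕ} (Ω : Set (EuclideanSpace ℝ (Fin d)))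
    (hΩo : IsOpen Ω) (hΩb : Bornology.IsBounded Ω)
    (Γout : Set (EuclideanSpace ℝ (Fin d))) (hΓ : Γout ⊆ frontier Ω)
    (c : ℝ) (hc : 0 < c)
    (hlayer : ∀ t : ℝ, 0 < t →
      (volume {x ∈ Ω | Metric.infDist x Γout ≤ t}).toReal ≤ c * t) :
    ∃ C : ℝ, 0 < C ∧
      ∀ (μ ν μΩ νΩ μS νS : Measure (EuclideanSpace ℝ (Fin d)))
        (fμ fν : EuclideanSpace ℝ (Fin d) → ℝ≥0∞),
        μ = μΩ + μS → ν = νΩ + νS →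
        μΩ = (volume.restrict Ω).withDensity fμ →
        νΩ = (volume.restrict Ω).withDensity fν →
        (∀ᵐ x ∂(volume.restrict Ω), fμ x ≤ 1) →
        (∀ᵐ x ∂(volume.restrict Ω), fν x ≤ 1) →
        μS Γoutᶜ = 0 → νS Γoutᶜ = 0 →
        IsProbabilityMeasure μ → IsProbabilityMeasure ν →
        |(μ Γout).toReal - (ν Γout).toReal| ≤ C * (Wass 2 μ ν) ^ (2/3 : ℝ) := by
  refine ⟨(8 * c ^ 2) ^ ((1:ℝ)/3), Real.rpow_pos_of_pos (by positivity) _, ?_⟩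
  intro μ ν μΩ' νΩ' μS νS fμ fν hμd hνd hμΩ hνΩ hfμ hfν hμS hνS hμp hνp
  haveI := hμp; haveI := hνp
  set E : ℝ := |(μ Γout).toReal - (ν Γout).toReal| with hE
  have hE0 : 0 ≤ E := abs_nonneg _
  have key : ∀ γ, IsCoupling γ μ ν →
      E ^ 3 / (8 * c ^ 2) ≤ ∫ z, dist z.1 z.2 ^ (2:ℝ) ∂γ := by
    intro γ hγ
    rcases le_total ((ν Γout).toReal) ((μ Γout).toReal) with h | h
    · have hle : ν Γout ≤ μ Γout :=
        (ENNReal.toReal_le_toReal (measure_ne_top ν _) (measure_ne_top μ _)).mp h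
      have hEeq : E = (μ Γout).toReal - (ν Γout).toReal := abs_of_nonneg (by linarith)
      rw [hEeq]
      exact coreA Ω hΩo hΩb Γout hΓ c hc hlayer μ ν μΩ' νΩ' μS νS fμ fν hμd hνd hμΩ hνΩ
        hfμ hfν hμS hνS hμp hνp hle γ hγ
    · have hle : μ Γout ≤ ν Γout :=
        (ENNReal.toReal_le_toReal (measure_ne_top μ _) (measure_ne_top ν _)).mp h
      have hswap : IsCoupling (γ.map Prod.swap) ν μ := by
        constructor
        · rw [Measure.map_map measurable_fst measurable_swap]
          exact hγ.2
        · rw [Measure.map_map measurable_snd measurable_swap]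
          exact hγ.1
      have hcore := coreA Ω hΩo hΩb Γout hΓ c hc hlayer ν μ νΩ' μΩ' νS μS fν fμ hνd hμd
        hνΩ hμΩ hfν hfμ hνS hμS hνp hμp hle _ hswap
      have hEeq : E = (ν Γout).toReal - (μ Γout).toReal := by
        rw [hE, abs_of_nonpos (by linarith)]; ring
      have hint_eq : ∫ z, dist z.1 z.2 ^ (2:ℝ) ∂(γ.map Prod.swap)
          = ∫ z, dist z.1 z.2 ^ (2:ℝ) ∂γ := by
        have hmeas : AEStronglyMeasurable
            (fun z : EuclideanSpace ℝ (Fin d) × EuclideanSpace ℝ (Fin d) =>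
              dist z.1 z.2 ^ (2:ℝ)) (γ.map Prod.swap) := by
          have hcont : Continuous (fun z : EuclideanSpace ℝ (Fin d) × EuclideanSpace ℝ (Fin d) =>
              dist z.1 z.2 ^ (2:ℝ)) := by
            have : (fun z : EuclideanSpace ℝ (Fin d) × EuclideanSpace ℝ (Fin d) =>
                dist z.1 z.2 ^ (2:ℝ)) = fun z => dist z.1 z.2 ^ (2:ℕ) := by
              funext z
              rw [show (2:ℝ) = ((2:ℕ):ℝ) by norm_num, Real.rpow_natCast]
            rw [this]
            exact (continuous_fst.dist continuous_snd).pow 2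
          exact hcont.aestronglyMeasurable
        rw [integral_map measurable_swap.aemeasurable hmeas]
        simp_rw [Prod.fst_swap, Prod.snd_swap, dist_comm]
      rw [hEeq, ← hint_eq]
      exact hcore
  -- bound the Wasserstein distance from below
  have hb : (E ^ 3 / (8 * c ^ 2)) ^ ((1:ℝ)/2) ≤ Wass 2 μ ν := by
    have hcoup : IsCoupling (μ.prod ν) μ ν := ⟨Measure.fst_prod, Measure.snd_prod⟩
    refine le_csInf ⟨_, μ.prod ν, hcoup, rfl⟩ ?_
    rintro b ⟨γ', hγ', rfl⟩
    have h1 := key γ' hγ'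
    have h2 : (0:ℝ) ≤ E ^ 3 / (8 * c ^ 2) := by positivity
    have := Real.rpow_le_rpow h2 h1 (by norm_num : (0:ℝ) ≤ 1/2)
    simpa using this
  have hWnn : (0:ℝ) ≤ Wass 2 μ ν := le_trans (Real.rpow_nonneg (by positivity) _) hb
  have h1 : (E ^ 3 / (8 * c ^ 2)) ^ (((1:ℝ)/2) * ((2:ℝ)/3)) ≤ (Wass 2 μ ν) ^ ((2:ℝ)/3) := by
    rw [Real.rpow_mul (by positivity)]
    exact Real.rpow_le_rpow (Real.rpow_nonneg (by positivity) _) hb (by norm_num)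
  have h3 : ((1:ℝ)/2) * ((2:ℝ)/3) = (1:ℝ)/3 := by norm_num
  have h2 : (E ^ 3 / (8 * c ^ 2)) ^ ((1:ℝ)/3) = E / (8 * c ^ 2) ^ ((1:ℝ)/3) := by
    rw [Real.div_rpow (by positivity) (by positivity)]
    congr 1
    rw [← Real.rpow_natCast E 3, ← Real.rpow_mul hE0]
    norm_num
  rw [h3, h2] at h1
  have hCpos : (0:ℝ) < (8 * c ^ 2) ^ ((1:ℝ)/3) := Real.rpow_pos_of_pos (by positivity) _
  calc E = (8 * c ^ 2) ^ ((1:ℝ)/3) * (E / (8 * c ^ 2) ^ ((1:ℝ)/3)) := by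
        field_simp
    _ ≤ (8 * c ^ 2) ^ ((1:ℝ)/3) * (Wass 2 μ ν) ^ ((2:ℝ)/3) :=
        mul_le_mul_of_nonneg_left h1 hCpos.le
end

section
/- The map M ↦ 1/det(M) is convex on the set of symmetric positive definite d×d matrices. -/
open Matrix Finset

lemma posDef_conj_aux {n : Type*} [Fintype n] [DecidableEq n]
    {A C : Matrix n n ℝ} (hA : A.PosDef) (hC : IsUnit C) :
    (Cᴴ * A * C).PosDef := by
  exact hA.conjTranspose_mul_mul_same (mulVec_injective_of_isUnit hC)

theorem stmt9 {d : ℕ} (M N : Matrix (Fin d) (Fin d) ℝ)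
    (hM : M.PosDef) (hN : N.PosDef) (t : ℝ) (ht : t ∈ Set.Icc (0:ℝ) 1) :
    ((1 - t) • M + t • N).det⁻¹ ≤ (1 - t) * M.det⁻¹ + t * N.det⁻¹ := by
  obtain ⟨ht0, ht1⟩ := ht
  have ht1' : 0 ≤ 1 - t := by linarith
  set S := (open scoped MatrixOrder in CFC.sqrt M) with hSdef
  have hSH : S.IsHermitian := by open scoped MatrixOrder in exact (CFC.sqrt_nonneg M).posSemidef.1
  have hSS : S * S = M := by
    open scoped MatrixOrder in exact CFC.sqrt_mul_sqrt_self M hM.posSemidef.nonneg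
  have hdetS : S.det * S.det = M.det := by rw [← det_mul, hSS]
  have hdetS0 : S.det ≠ 0 := by
    intro h; rw [h, mul_zero] at hdetS; exact hM.det_pos.ne' hdetS.symm
  have hSunit : IsUnit S := (isUnit_iff_isUnit_det S).2 hdetS0.isUnit
  have hSinv : S * S⁻¹ = 1 := mul_nonsing_inv S hdetS0.isUnit
  have hinvS : S⁻¹ * S = 1 := nonsing_inv_mul S hdetS0.isUnit
  set B := S⁻¹ * N * S⁻¹ with hBdef
  have hB : B.PosDef := by
    have := posDef_conj_aux hN (isUnit_nonsing_inv_iff.2 hSunit)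
    rwa [hSH.inv.eq] at this
  set ev := hB.1.eigenvalues with hev
  have hevpos : ∀ i, 0 < ev i := fun i => hB.eigenvalues_pos i
  set C : Matrix (Fin d) (Fin d) ℝ := (1 - t) • 1 + t • B with hCdef
  -- factorization
  have hSBS : S * B * S = N := by
    rw [hBdef, ← mul_assoc, ← mul_assoc, hSinv, one_mul, mul_assoc, hinvS, mul_one]
  have key : (1 - t) • M + t • N = S * C * S := by
    rw [hCdef, Matrix.mul_add, Matrix.add_mul, mul_smul_comm, smul_mul_assoc,
      mul_smul_comm, smul_mul_assoc, mul_one, hSS, hSBS]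
  -- det C = prod of (1-t) + t * ev i
  have hdetC : C.det = ∏ i, ((1 - t) + t * ev i) := by
    have hspec := hB.1.spectral_theorem
    set U : Matrix (Fin d) (Fin d) ℝ := (hB.1.eigenvectorUnitary : Matrix (Fin d) (Fin d) ℝ) with hU
    have hUU : U * star U = 1 := (Matrix.mem_unitaryGroup_iff).mp hB.1.eigenvectorUnitary.2
    have hC2 : C = U * ((1 - t) • 1 + t • diagonal (RCLike.ofReal ∘ ev)) * star U := by
      rw [hCdef]
      conv_lhs => rw [hspec, Unitary.conjStarAlgAut_apply]
      rw [Matrix.mul_add, Matrix.add_mul, mul_smul_comm, smul_mul_assoc,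
        mul_smul_comm, smul_mul_assoc, mul_one, hUU]
    have hU1 : U.det * (star U).det = 1 := by rw [← det_mul, hUU, det_one]
    have hdiag : (1 - t) • (1 : Matrix (Fin d) (Fin d) ℝ) + t • diagonal (RCLike.ofReal ∘ ev)
        = diagonal (fun i => (1 - t) + t * ev i) := by
      ext i j
      rcases eq_or_ne i j with h | h
      · subst h
        simp [Matrix.diagonal_apply_eq, Matrix.one_apply_eq]
      · simp [Matrix.diagonal_apply_ne _ h, Matrix.one_apply_ne h]
    rw [hC2, det_mul, det_mul, hdiag, det_diagonal]
    linear_combination (∏ i, ((1 - t) + t * ev i)) * hU1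
  have hdet : ((1 - t) • M + t • N).det = M.det * ∏ i, ((1 - t) + t * ev i) := by
    rw [key, det_mul, det_mul, hdetC, mul_comm, ← mul_assoc, mul_comm S.det, hdetS]
  have hdetB : B.det = N.det * M.det⁻¹ := by
    have h1 : B.det = S.det⁻¹ * N.det * S.det⁻¹ := by
      rw [hBdef, det_mul, det_mul, det_nonsing_inv, Ring.inverse_eq_inv]
    rw [h1, ← hdetS]
    field_simp
    try ring
  have hdetBev : B.det = ∏ i, ev i := by
    have := hB.1.det_eq_prod_eigenvalues
    simpa using this
  -- numeric inequality
  have hfpos : ∀ i, 0 < (1 - t) + t * ev i := by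
    intro i
    rcases lt_or_eq_of_le ht1 with h | h
    · have : 0 ≤ t * ev i := mul_nonneg ht0 (hevpos i).le
      linarith
    · have : t * ev i > 0 := mul_pos (by linarith) (hevpos i)
      linarith
  have step1 : ∀ i, ((1 - t) + t * ev i)⁻¹ ≤ ((ev i)⁻¹) ^ t := by
    intro i
    have h1 : (ev i) ^ t ≤ (1 - t) + t * ev i := by
      have := Real.geom_mean_le_arith_mean2_weighted ht1' ht0 zero_le_one (hevpos i).le
        (by ring)
      simpa using this
    have h2 : (0:ℝ) < (ev i) ^ t := Real.rpow_pos_of_pos (hevpos i) t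
    rw [Real.inv_rpow (hevpos i).le]
    exact inv_anti₀ h2 h1
  have step2 : ∏ i, ((1 - t) + t * ev i)⁻¹ ≤ ∏ i, ((ev i)⁻¹) ^ t :=
    Finset.prod_le_prod (fun i _ => inv_nonneg.2 (hfpos i).le) (fun i _ => step1 i)
  have step3 : ∏ i, ((ev i)⁻¹) ^ t = (∏ i, (ev i)⁻¹) ^ t :=
    Real.finset_prod_rpow _ _ (fun i _ => inv_nonneg.2 (hevpos i).le) t
  have hPpos : (0:ℝ) < ∏ i, ev i := Finset.prod_pos fun i _ => hevpos i
  have step4 : ((∏ i, ev i)⁻¹ : ℝ) ^ t ≤ (1 - t) + t * (∏ i, ev i)⁻¹ := by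
    have := Real.geom_mean_le_arith_mean2_weighted ht1' ht0 zero_le_one
      (inv_nonneg.2 hPpos.le) (by ring)
    simpa using this
  have hQineq : (∏ i, ((1 - t) + t * ev i))⁻¹ ≤ (1 - t) + t * (∏ i, ev i)⁻¹ := by
    calc (∏ i, ((1 - t) + t * ev i))⁻¹ = ∏ i, ((1 - t) + t * ev i)⁻¹ := by
          rw [← Finset.prod_inv_distrib]
      _ ≤ ∏ i, ((ev i)⁻¹) ^ t := step2
      _ = (∏ i, (ev i)⁻¹) ^ t := step3
      _ = ((∏ i, ev i)⁻¹) ^ t := by rw [Finset.prod_inv_distrib]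
      _ ≤ (1 - t) + t * (∏ i, ev i)⁻¹ := step4
  have hNdet : N.det = M.det * ∏ i, ev i := by
    rw [← hdetBev, hdetB]
    field_simp [hM.det_pos.ne']
    try ring
  rw [hdet, hNdet, mul_inv, mul_inv]
  have h := mul_le_mul_of_nonneg_left hQineq (inv_nonneg.2 hM.det_pos.le)
  nlinarith [h]
end

section
/- Let Ω ⊂ ℝ^d be bounded, Γ_out ⊂ ∂Ω, D : Ω → ℝ continuous attaining its minimum exactly on Γ_out (and constant there). Let ρ^{k−1}, ρ^k ∈ K with ρ^k minimizing ρ ↦ ∫ D dρ + I_K(ρ) + W₂²(ρ, ρ^{k−1})/(2τ), and let γ be an optimal transport plan from ρ^k to ρ^{k−1}. Then for every (x, y) in the support of γ with y ∈ Γ_out, one has x = y. In particular, the mass that ρ^{k−1} carries on Γ_out does not move. -/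
open MeasureTheory
open scoped ENNReal NNReal

/-- Admissible measures: density `≤ 1` inside `Ω` plus a singular part on `Γout`. -/
def KsetExit {d : ℕ} (Ω Γout : Set (EuclideanSpace ℝ (Fin d))) :
    Set (Measure (EuclideanSpace ℝ (Fin d))) :=
  {μ | IsProbabilityMeasure μ ∧
    ∃ (μΩ μS : Measure (EuclideanSpace ℝ (Fin d))) (f : EuclideanSpace ℝ (Fin d) → ℝ≥0∞),
      μ = μΩ + μS ∧ μΩ = (volume.restrict Ω).withDensity f ∧
      (∀ᵐ x ∂(volume.restrict Ω), f x ≤ 1) ∧ μS Γoutᶜ = 0}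

theorem stmt17 {d : ℕ} (Ω : Set (EuclideanSpace ℝ (Fin d)))
    (hΩo : IsOpen Ω) (hΩb : Bornology.IsBounded Ω)
    (Γout : Set (EuclideanSpace ℝ (Fin d))) (hΓ : Γout ⊆ frontier Ω)
    (D : EuclideanSpace ℝ (Fin d) → ℝ) (hDcont : Continuous D)
    (m : ℝ) (hDmin : ∀ x ∈ Γout, D x = m)
    (hDgt : ∀ x ∈ closure Ω \ Γout, m < D x)
    (τ : ℝ) (hτ : 0 < τ)
    (ρkm1 ρk : Measure (EuclideanSpace ℝ (Fin d)))
    (hρkm1 : ρkm1 ∈ KsetExit Ω Γout) (hρk : ρk ∈ KsetExit Ω Γout)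
    (hmin : ∀ ρ ∈ KsetExit Ω Γout,
      (∫ x, D x ∂ρk) + Wass 2 ρk ρkm1 ^ 2 / (2 * τ) ≤
        (∫ x, D x ∂ρ) + Wass 2 ρ ρkm1 ^ 2 / (2 * τ))
    (γ : Measure (EuclideanSpace ℝ (Fin d) × EuclideanSpace ℝ (Fin d)))
    (hγ : IsCoupling γ ρk ρkm1)
    (hγopt : ∀ γ' : Measure (EuclideanSpace ℝ (Fin d) × EuclideanSpace ℝ (Fin d)),
      IsCoupling γ' ρk ρkm1 → (∫ z, dist z.1 z.2 ^ 2 ∂γ) ≤ ∫ z, dist z.1 z.2 ^ 2 ∂γ') :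
    γ {z : EuclideanSpace ℝ (Fin d) × EuclideanSpace ℝ (Fin d) |
        z.2 ∈ Γout ∧ z.1 ≠ z.2} = 0 := by

  classical
  by_contra hne
  -- Γout is a closed (hence measurable) set
  have hΓcl : Γout ⊆ closure Ω := fun x hx => frontier_subset_closure (hΓ hx)
  have hΓeq : Γout = closure Ω ∩ D ⁻¹' {m} := by
    ext x
    constructor
    · intro hx
      exact ⟨hΓcl hx, hDmin x hx⟩
    · rintro ⟨hx1, hx2⟩
      by_contra hxn
      exact absurd (Set.mem_singleton_iff.1 hx2) (ne_of_gt (hDgt x ⟨hx1, hxn⟩))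
  have hΓm : MeasurableSet Γout := by
    rw [hΓeq]
    exact (isClosed_closure.inter (isClosed_singleton.preimage hDcont)).measurableSet
  -- every admissible measure is carried by the closure of Ω
  have hsupp : ∀ μ : Measure (EuclideanSpace ℝ (Fin d)), μ ∈ KsetExit Ω Γout →
      μ (closure Ω)ᶜ = 0 := by
    rintro μ ⟨-, μΩ', μS', f', rfl, rfl, hf', hμS'⟩
    have hzero : (volume.restrict Ω) (closure Ω)ᶜ = 0 := by
      rw [Measure.restrict_apply' hΩo.measurableSet]
      have : (closure Ω)ᶜ ∩ Ω = ∅ := by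
        rw [Set.eq_empty_iff_forall_notMem]
        rintro x ⟨hx1, hx2⟩
        exact hx1 (subset_closure hx2)
      rw [this, measure_empty]
    have h1 : ((volume.restrict Ω).withDensity f') (closure Ω)ᶜ = 0 := by
      rw [withDensity_apply _ isClosed_closure.measurableSet.compl,
        Measure.restrict_eq_zero.2 hzero, lintegral_zero_measure]
    have h2 : μS' (closure Ω)ᶜ = 0 :=
      measure_mono_null (Set.compl_subset_compl.2 hΓcl) hμS'
    simp [h1, h2]
  obtain ⟨hγ1, hγ2⟩ := hγ
  have hρkP : IsProbabilityMeasure ρk := hρk.1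
  -- γ is a probability measure
  have hγuniv : γ Set.univ = 1 := by
    have h := hρkP.measure_univ
    rw [← hγ1, Measure.map_apply measurable_fst MeasurableSet.univ,
      Set.preimage_univ] at h
    exact h
  haveI hγP : IsProbabilityMeasure γ := ⟨hγuniv⟩
  -- a.e., both coordinates lie in the closure of Ω
  have hae1 : ∀ᵐ z ∂γ, z.1 ∈ closure Ω := by
    rw [ae_iff]
    have hset : {z : EuclideanSpace ℝ (Fin d) × EuclideanSpace ℝ (Fin d) |
        ¬ z.1 ∈ closure Ω} = Prod.fst ⁻¹' (closure Ω)ᶜ := rfl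
    rw [hset, ← Measure.map_apply measurable_fst isClosed_closure.measurableSet.compl, hγ1]
    exact hsupp ρk hρk
  have hae2 : ∀ᵐ z ∂γ, z.2 ∈ closure Ω := by
    rw [ae_iff]
    have hset : {z : EuclideanSpace ℝ (Fin d) × EuclideanSpace ℝ (Fin d) |
        ¬ z.2 ∈ closure Ω} = Prod.snd ⁻¹' (closure Ω)ᶜ := rfl
    rw [hset, ← Measure.map_apply measurable_snd isClosed_closure.measurableSet.compl, hγ2]
    exact hsupp ρkm1 hρkm1
  -- the modification maps
  set g : EuclideanSpace ℝ (Fin d) × EuclideanSpace ℝ (Fin d) → EuclideanSpace ℝ (Fin d) :=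
    fun z => if z.2 ∈ Γout then z.2 else z.1 with hg_def
  have hgm : Measurable g := Measurable.ite (measurable_snd hΓm) measurable_snd measurable_fst
  set F : EuclideanSpace ℝ (Fin d) × EuclideanSpace ℝ (Fin d) →
      EuclideanSpace ℝ (Fin d) × EuclideanSpace ℝ (Fin d) := fun z => (g z, z.2) with hF_def
  have hFm : Measurable F := hgm.prodMk measurable_snd
  have hcoup : IsCoupling (γ.map F) (γ.map g) ρkm1 := by
    constructor
    · rw [Measure.map_map measurable_fst hFm]
      rfl
    · rw [Measure.map_map measurable_snd hFm]
      exact hγ2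
  -- the modified measure is admissible
  haveI : IsFiniteMeasure (volume.restrict Ω) :=
    ⟨by rw [Measure.restrict_apply_univ]; exact hΩb.measure_lt_top⟩
  haveI hρ'P : IsProbabilityMeasure (γ.map g) := Measure.isProbabilityMeasure_map hgm.aemeasurable
  have hle : (γ.map g).restrict Γoutᶜ ≤ volume.restrict Ω := by
    refine Measure.le_iff.2 fun A hA => ?_
    rw [Measure.restrict_apply hA, Measure.map_apply hgm (hA.inter hΓm.compl)]
    have hsub : g ⁻¹' (A ∩ Γoutᶜ) ⊆ Prod.fst ⁻¹' (A ∩ Γoutᶜ) := by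
      intro z hz
      simp only [Set.mem_preimage] at hz ⊢
      by_cases h2 : z.2 ∈ Γout
      · exfalso
        rw [hg_def] at hz
        simp only [if_pos h2] at hz
        exact hz.2 h2
      · rw [hg_def] at hz
        simpa only [if_neg h2] using hz
    obtain ⟨-, μΩk, μSk, fk, hρkd, hμΩd, hfk, hμSk⟩ := hρk
    calc γ (g ⁻¹' (A ∩ Γoutᶜ)) ≤ γ (Prod.fst ⁻¹' (A ∩ Γoutᶜ)) := measure_mono hsub
      _ = ρk (A ∩ Γoutᶜ) := by
          rw [← hγ1, Measure.map_apply measurable_fst (hA.inter hΓm.compl)]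
      _ = μΩk (A ∩ Γoutᶜ) + μSk (A ∩ Γoutᶜ) := by rw [hρkd, Measure.add_apply]
      _ ≤ μΩk (A ∩ Γoutᶜ) + 0 := by
          gcongr
          exact le_of_eq (measure_mono_null (Set.inter_subset_right) hμSk)
      _ = ∫⁻ x in A ∩ Γoutᶜ, fk x ∂(volume.restrict Ω) := by
          rw [hμΩd, add_zero, withDensity_apply _ (hA.inter hΓm.compl)]
      _ ≤ ∫⁻ _ in A ∩ Γoutᶜ, 1 ∂(volume.restrict Ω) :=
          lintegral_mono_ae (ae_restrict_of_ae hfk)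
      _ = (volume.restrict Ω) (A ∩ Γoutᶜ) := by
          rw [lintegral_one, Measure.restrict_apply_univ]
      _ ≤ (volume.restrict Ω) A := measure_mono Set.inter_subset_left
  have hac : (γ.map g).restrict Γoutᶜ ≪ volume.restrict Ω :=
    Measure.absolutelyContinuous_of_le hle
  haveI : IsFiniteMeasure ((γ.map g).restrict Γoutᶜ) :=
    ⟨lt_of_le_of_lt (le_trans (measure_mono (Set.subset_univ _)) (hle Set.univ))
      (measure_lt_top _ _)⟩
  have hwd : (volume.restrict Ω).withDensity
      (((γ.map g).restrict Γoutᶜ).rnDeriv (volume.restrict Ω)) = (γ.map g).restrict Γoutᶜ :=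
    Measure.withDensity_rnDeriv_eq _ _ hac
  have hbd : ((γ.map g).restrict Γoutᶜ).rnDeriv (volume.restrict Ω) ≤ᵐ[volume.restrict Ω] 1 :=
    Measure.rnDeriv_le_one_of_le hle
  have hρ'mem : γ.map g ∈ KsetExit Ω Γout := by
    refine ⟨hρ'P, (γ.map g).restrict Γoutᶜ, (γ.map g).restrict Γout,
      ((γ.map g).restrict Γoutᶜ).rnDeriv (volume.restrict Ω),
      (Measure.restrict_compl_add_restrict hΓm).symm, hwd.symm, hbd, ?_⟩
    rw [Measure.restrict_apply hΓm.compl]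
    simp
  -- bounds
  obtain ⟨M, hM⟩ := hΩb.isCompact_closure.exists_bound_of_continuousOn hDcont.continuousOn
  obtain ⟨R, hR⟩ := hΩb.closure.subset_closedBall (0 : EuclideanSpace ℝ (Fin d))
  have haeg : ∀ᵐ z ∂γ, g z ∈ closure Ω := by
    filter_upwards [hae1, hae2] with z h1 h2
    rw [hg_def]
    by_cases h : z.2 ∈ Γout
    · simpa only [if_pos h] using h2
    · simpa only [if_neg h] using h1
  -- integrability
  have hiD1 : Integrable (fun z => D z.1) γ :=
    ⟨(hDcont.comp continuous_fst).aestronglyMeasurable,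
      HasFiniteIntegral.of_bounded (C := M)
        (by filter_upwards [hae1] with z hz using hM _ hz)⟩
  have hiD2 : Integrable (fun z => D (g z)) γ :=
    ⟨(hDcont.measurable.comp hgm).aestronglyMeasurable,
      HasFiniteIntegral.of_bounded (C := M)
        (by filter_upwards [haeg] with z hz using hM _ hz)⟩
  have hiC : Integrable (fun z => dist z.1 z.2 ^ 2) γ := by
    refine ⟨((continuous_dist.comp (continuous_fst.prodMk continuous_snd)).pow 2)
      |>.aestronglyMeasurable, HasFiniteIntegral.of_bounded (C := (2*R)^2) ?_⟩
    filter_upwards [hae1, hae2] with z h1 h2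
    have h1' : dist z.1 0 ≤ R := Metric.mem_closedBall.1 (hR h1)
    have h2' : dist z.2 0 ≤ R := Metric.mem_closedBall.1 (hR h2)
    have hd : dist z.1 z.2 ≤ 2 * R := by
      calc dist z.1 z.2 ≤ dist z.1 0 + dist 0 z.2 := dist_triangle _ _ _
        _ ≤ R + R := by rw [dist_comm (0:EuclideanSpace ℝ (Fin d))]; exact add_le_add h1' h2'
        _ = 2 * R := by ring
    rw [Real.norm_eq_abs, abs_of_nonneg (by positivity)]
    exact pow_le_pow_left₀ dist_nonneg hd 2
  have hiC' : Integrable (fun z => dist (g z) z.2 ^ 2) γ := by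
    refine hiC.mono (((hgm.dist measurable_snd).pow_const 2).aestronglyMeasurable)
      (ae_of_all _ fun z => ?_)
    by_cases h : z.2 ∈ Γout
    · simp only [hg_def, if_pos h, dist_self]
      rw [zero_pow (by norm_num : (2:ℕ) ≠ 0), norm_zero]
      exact norm_nonneg _
    · simp only [hg_def, if_neg h, le_refl]
  -- integral identities
  have hIk : ∫ x, D x ∂ρk = ∫ z, D z.1 ∂γ := by
    rw [← hγ1, integral_map measurable_fst.aemeasurable hDcont.aestronglyMeasurable]
  have hI' : ∫ x, D x ∂(γ.map g) = ∫ z, D (g z) ∂γ :=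
    integral_map hgm.aemeasurable hDcont.aestronglyMeasurable
  have hDle : ∫ z, D (g z) ∂γ ≤ ∫ z, D z.1 ∂γ := by
    refine integral_mono_ae hiD2 hiD1 ?_
    filter_upwards [hae1] with z h1
    rw [hg_def]
    by_cases h : z.2 ∈ Γout
    · simp only [if_pos h]
      rw [hDmin _ h]
      rcases em (z.1 ∈ Γout) with h' | h'
      · rw [hDmin _ h']
      · exact le_of_lt (hDgt _ ⟨h1, h'⟩)
    · simp only [if_neg h, le_refl]
  -- strict decrease of the transport cost
  set C : ℝ := ∫ z, dist z.1 z.2 ^ 2 ∂γ with hC_def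
  set C' : ℝ := ∫ z, dist (g z) z.2 ^ 2 ∂γ with hC'_def
  have hCnn : (0:ℝ) ≤ C := integral_nonneg fun z => by positivity
  have hC'nn : (0:ℝ) ≤ C' := integral_nonneg fun z => by positivity
  have hnonneg : 0 ≤ᵐ[γ] fun z => dist z.1 z.2 ^ 2 - dist (g z) z.2 ^ 2 := by
    refine ae_of_all _ fun z => ?_
    simp only [Pi.zero_apply, sub_nonneg]
    by_cases h : z.2 ∈ Γout
    · simp only [hg_def, if_pos h, dist_self]
      rw [zero_pow (by norm_num : (2:ℕ) ≠ 0)]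
      positivity
    · simp only [hg_def, if_neg h, le_refl]
  have hint : Integrable (fun z => dist z.1 z.2 ^ 2 - dist (g z) z.2 ^ 2) γ := hiC.sub hiC'
  have hpos : 0 < ∫ z, (dist z.1 z.2 ^ 2 - dist (g z) z.2 ^ 2) ∂γ := by
    rcases lt_or_eq_of_le (integral_nonneg_of_ae hnonneg) with h | h
    · exact h
    · exfalso
      have h0 := (integral_eq_zero_iff_of_nonneg_ae hnonneg hint).1 h.symm
      rw [Filter.EventuallyEq, ae_iff] at h0
      refine hne (measure_mono_null ?_ h0)
      rintro z ⟨hz2, hz12⟩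
      simp only [Set.mem_setOf_eq, Pi.zero_apply]
      rw [hg_def]
      simp only [if_pos hz2, dist_self, ne_eq]
      rw [zero_pow (by norm_num), sub_zero]
      exact pow_ne_zero 2 (dist_ne_zero.2 hz12)
  have hCC' : C' < C := by
    rw [integral_sub hiC hiC'] at hpos
    rw [← hC_def, ← hC'_def] at hpos
    linarith
  -- rpow versus pow
  have hp2 : ∀ μ' : Measure (EuclideanSpace ℝ (Fin d) × EuclideanSpace ℝ (Fin d)),
      (∫ z, dist z.1 z.2 ^ (2:ℝ) ∂μ') = ∫ z, dist z.1 z.2 ^ 2 ∂μ' := by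
    intro μ'
    simp_rw [Real.rpow_two]
  -- lower bound on the Wasserstein distance of the optimal plan
  have hWk : C ≤ Wass 2 ρk ρkm1 ^ 2 := by
    have h1 : C ^ ((1:ℝ)/2) ≤ Wass 2 ρk ρkm1 := by
      unfold Wass
      refine le_csInf ⟨_, γ, ⟨hγ1, hγ2⟩, rfl⟩ ?_
      rintro c ⟨γ'', hc'', rfl⟩
      rw [hp2]
      exact Real.rpow_le_rpow hCnn (hγopt γ'' hc'') (by norm_num)
    calc C = (C ^ ((1:ℝ)/2)) ^ 2 := by
          rw [← Real.rpow_natCast (C ^ ((1:ℝ)/2)) 2, ← Real.rpow_mul hCnn]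
          norm_num
      _ ≤ Wass 2 ρk ρkm1 ^ 2 := pow_le_pow_left₀ (Real.rpow_nonneg hCnn _) h1 2
  -- upper bound on the Wasserstein distance of the modified measure
  have hWnn : ∀ μ' ν' : Measure (EuclideanSpace ℝ (Fin d)), 0 ≤ Wass 2 μ' ν' := by
    intro μ' ν'
    apply Real.sInf_nonneg
    rintro c ⟨γ'', -, rfl⟩
    exact Real.rpow_nonneg (integral_nonneg fun z => Real.rpow_nonneg dist_nonneg _) _
  have hW'le : Wass 2 (γ.map g) ρkm1 ≤ C' ^ ((1:ℝ)/2) := by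
    unfold Wass
    apply csInf_le
    · refine ⟨0, ?_⟩
      rintro c ⟨γ'', -, rfl⟩
      exact Real.rpow_nonneg (integral_nonneg fun z => Real.rpow_nonneg dist_nonneg _) _
    · refine ⟨γ.map F, hcoup, ?_⟩
      rw [hp2]
      have : (∫ z, dist z.1 z.2 ^ 2 ∂(γ.map F)) = C' := by
        rw [integral_map (f := fun z => dist z.1 z.2 ^ 2) hFm.aemeasurable
          (Continuous.aestronglyMeasurable ((continuous_fst.dist continuous_snd).pow 2))]
      rw [this]
  have hW'sq : Wass 2 (γ.map g) ρkm1 ^ 2 ≤ C' := by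
    calc Wass 2 (γ.map g) ρkm1 ^ 2 ≤ (C' ^ ((1:ℝ)/2)) ^ 2 :=
        pow_le_pow_left₀ (hWnn _ _) hW'le 2
      _ = C' := by
          rw [← Real.rpow_natCast (C' ^ ((1:ℝ)/2)) 2, ← Real.rpow_mul hC'nn]
          norm_num
  -- conclude
  have hmain := hmin (γ.map g) hρ'mem
  rw [hIk, hI'] at hmain
  have h2τ : (0:ℝ) < 2 * τ := by linarith
  have e1 : C / (2*τ) ≤ Wass 2 ρk ρkm1 ^ 2 / (2*τ) := by gcongr
  have e2 : Wass 2 (γ.map g) ρkm1 ^ 2 / (2*τ) ≤ C' / (2*τ) := by gcongr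
  have hfinal : C / (2*τ) ≤ C' / (2*τ) := by linarith
  have hCle : C ≤ C' := (div_le_div_iff_of_pos_right h2τ).1 hfinal
  linarith
end
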